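/- Let u = u₁⋯u_m and v = v₁⋯v_n be nonempty words given in their Lyndon decompositions (so u_i and v_j are Lyndon words with u₁ ≤_lex ⋯ ≤_lex u_m and v₁ ≤_lex ⋯ ≤_lex v_n). Then u <_lex v if and only if either n < m and u_i = v_i for all i ≤ n, or there exists l ≤ min{m, n} with u_i = v_i for i < l and u_l <_lex v_l. -/
import Mathlib


set_option linter.unusedSectionVars false
set_option linter.unusedVariables false

variable {X : Type*} [LinearOrder X] [WellFoundedLT X]

/-- The partial order `≺` on words: `u ≺ v` iff `u = r ++ x :: s`, `v = r ++ y :: t`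
with letters `x < y`. -/
def Prec (u v : List X) : Prop :=
  ∃ (r s t : List X) (x y : X), x < y ∧ u = r ++ x :: s ∧ v = r ++ y :: t

/-- The pseudo-lexicographic order: `u <_lex v` iff `v` is a proper prefix of `u` or `u ≺ v`. -/
def PLex (u v : List X) : Prop :=
  (v <+: u ∧ v ≠ u) ∨ Prec u v

/-- `u ≤_lex v`. -/
def PLexLe (u v : List X) : Prop := u = v ∨ PLex u v

/-- A Lyndon word (Kharchenko convention): a nonempty word strictly greater in the
pseudo-lexicographic order than each of its proper nonempty suffixes. -/
def IsLyndon (u : List X) : Prop :=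
  u ≠ [] ∧ ∀ v w : List X, u = v ++ w → v ≠ [] → w ≠ [] → PLex w u


/-- `l` is the Lyndon decomposition of `u`: `u` is the concatenation of the Lyndon
words in `l`, listed in nondecreasing pseudo-lexicographic order. -/
def IsLyndonDecomp (u : List X) (l : List (List X)) : Prop :=
  u = l.flatten ∧ (∀ v ∈ l, IsLyndon v) ∧ l.Chain' PLexLe


lemma plex_nil_left (v : List X) : ¬ PLex [] v := by
  rintro (⟨h, hne⟩ | ⟨r, s, t, x, y, hxy, h1, h2⟩)
  · exact hne (List.prefix_nil.mp h)
  · exact absurd h1.symm (List.append_ne_nil_of_right_ne_nil _ (by simp))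

lemma plex_nil_right {u : List X} (hu : u ≠ []) : PLex u [] :=
  Or.inl ⟨List.nil_prefix, fun h => hu h.symm⟩

lemma plex_cons_iff {x y : X} {u v : List X} :
    PLex (x :: u) (y :: v) ↔ x < y ∨ (x = y ∧ PLex u v) := by
  constructor
  · rintro (⟨h, hne⟩ | ⟨r, s, t, a, b, hab, h1, h2⟩)
    · rw [List.cons_prefix_cons] at h
      exact Or.inr ⟨h.1.symm, Or.inl ⟨h.2, fun he => hne (by rw [h.1, he])⟩⟩
    · cases r with
      | nil =>
        simp only [List.nil_append, List.cons.injEq] at h1 h2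
        exact Or.inl (h1.1 ▸ h2.1 ▸ hab)
      | cons c r' =>
        simp only [List.cons_append, List.cons.injEq] at h1 h2
        exact Or.inr ⟨h1.1.trans h2.1.symm, Or.inr ⟨r', s, t, a, b, hab, h1.2, h2.2⟩⟩
  · rintro (h | ⟨rfl, (⟨h, hne⟩ | ⟨r, s, t, a, b, hab, h1, h2⟩)⟩)
    · exact Or.inr ⟨[], u, v, x, y, h, rfl, rfl⟩
    · exact Or.inl ⟨List.cons_prefix_cons.mpr ⟨rfl, h⟩, by simpa using hne⟩
    · exact Or.inr ⟨x :: r, s, t, a, b, hab, by simp [h1], by simp [h2]⟩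

lemma plex_irrefl (u : List X) : ¬ PLex u u := by
  induction u with
  | nil => exact plex_nil_left []
  | cons x u ih =>
    rw [plex_cons_iff]
    rintro (h | ⟨-, h⟩)
    · exact lt_irrefl x h
    · exact ih h

lemma plex_trans {u v w : List X} (h1 : PLex u v) (h2 : PLex v w) : PLex u w := by
  induction u generalizing v w with
  | nil => exact absurd h1 (plex_nil_left v)
  | cons x u ih =>
    cases v with
    | nil => exact absurd h2 (plex_nil_left w)
    | cons y v =>
      cases w with
      | nil => exact plex_nil_right (by simp)
      | cons z w =>
        rw [plex_cons_iff] at h1 h2 ⊢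
        rcases h1 with h1 | ⟨rfl, h1⟩
        · rcases h2 with h2 | ⟨rfl, h2⟩
          · exact Or.inl (h1.trans h2)
          · exact Or.inl h1
        · rcases h2 with h2 | ⟨rfl, h2⟩
          · exact Or.inl h2
          · exact Or.inr ⟨rfl, ih h1 h2⟩

lemma plex_trichotomy (u v : List X) : u = v ∨ PLex u v ∨ PLex v u := by
  induction u generalizing v with
  | nil =>
    cases v with
    | nil => exact Or.inl rfl
    | cons y v => exact Or.inr (Or.inr (plex_nil_right (by simp)))
  | cons x u ih =>
    cases v with
    | nil => exact Or.inr (Or.inl (plex_nil_right (by simp)))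
    | cons y v =>
      rcases lt_trichotomy x y with h | rfl | h
      · exact Or.inr (Or.inl (plex_cons_iff.mpr (Or.inl h)))
      · rcases ih v with rfl | h | h
        · exact Or.inl rfl
        · exact Or.inr (Or.inl (plex_cons_iff.mpr (Or.inr ⟨rfl, h⟩)))
        · exact Or.inr (Or.inr (plex_cons_iff.mpr (Or.inr ⟨rfl, h⟩)))
      · exact Or.inr (Or.inr (plex_cons_iff.mpr (Or.inl h)))

lemma plex_asymm {u v : List X} (h : PLex u v) : ¬ PLex v u :=
  fun h' => plex_irrefl u (plex_trans h h')

lemma plexle_trans {u v w : List X} (h1 : PLexLe u v) (h2 : PLexLe v w) : PLexLe u w := by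
  rcases h1 with rfl | h1
  · exact h2
  rcases h2 with rfl | h2
  · exact Or.inr h1
  · exact Or.inr (plex_trans h1 h2)

lemma plex_of_plex_of_plexle {u v w : List X} (h1 : PLex u v) (h2 : PLexLe v w) : PLex u w := by
  rcases h2 with rfl | h2
  · exact h1
  · exact plex_trans h1 h2

lemma plex_append_left {u v : List X} (c : List X) (h : PLex u v) :
    PLex (c ++ u) (c ++ v) := by
  induction c with
  | nil => exact h
  | cons a c ih => exact plex_cons_iff.mpr (Or.inr ⟨rfl, ih⟩)

lemma plex_append_left_iff {u v : List X} (c : List X) :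
    PLex (c ++ u) (c ++ v) ↔ PLex u v := by
  refine ⟨fun h => ?_, plex_append_left c⟩
  rcases plex_trichotomy u v with rfl | h' | h'
  · exact absurd h (plex_irrefl _)
  · exact h'
  · exact absurd h (plex_asymm (plex_append_left c h'))

lemma prec_append {u v u' v' : List X} (h : Prec u v) : Prec (u ++ u') (v ++ v') := by
  obtain ⟨r, s, t, x, y, hxy, rfl, rfl⟩ := h
  exact ⟨r, s ++ u', t ++ v', x, y, hxy, by simp, by simp⟩

instance : IsTrans (List X) PLexLe := ⟨fun _ _ _ => plexle_trans⟩

/-- Key lemma: `d` a nonempty proper suffix piece of a Lyndon word `a` with `PLex a b`,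
and all factors of `ms'` are `≥ b`; then `d ++ u''` is `<` the flatten of `ms'`. -/
lemma key {a b : List X} (ha : IsLyndon a) (hab : PLex a b) :
    ∀ (ms' : List (List X)), (∀ f ∈ ms', PLexLe b f) →
    ∀ (d c u'' : List X), d ≠ [] → c ≠ [] → a = c ++ d →
    PLex (d ++ u'') ms'.flatten := by
  intro ms'
  induction ms' with
  | nil =>
    intro _ d c u'' hd hc hacd
    simpa using plex_nil_right (List.append_ne_nil_of_left_ne_nil hd u'')
  | cons b₂ rest ih =>
    intro hb d c u'' hd hc hacd
    have hda : PLex d a := ha.2 c d hacd hc hd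
    have hdb : PLex d b := plex_trans hda hab
    have hdb₂ : PLex d b₂ := plex_of_plex_of_plexle hdb (hb b₂ (by simp))
    rcases hdb₂ with ⟨⟨d', rfl⟩, hne⟩ | hprec
    · have hd' : d' ≠ [] := by rintro rfl; exact hne (by simp)
      rw [List.flatten_cons, List.append_assoc]
      refine plex_append_left b₂ ?_
      exact ih (fun f hf => hb f (by simp [hf])) d' (c ++ b₂) u'' hd'
        (List.append_ne_nil_of_left_ne_nil hc b₂) (by rw [hacd]; simp)
    · rw [List.flatten_cons]
      exact Or.inr (prec_append hprec)

/-- Step lemma: compare `a ++ u'` with `b ++ ms'.flatten` when `PLex a b`. -/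
lemma step {a b : List X} (ha : IsLyndon a) (hb : IsLyndon b) (hab : PLex a b)
    {ms' : List (List X)} (hms' : ∀ f ∈ ms', PLexLe b f) (u' : List X) :
    PLex (a ++ u') (b ++ ms'.flatten) := by
  rcases hab with ⟨⟨d, rfl⟩, hne⟩ | hprec
  · have hd : d ≠ [] := by rintro rfl; exact hne (by simp)
    rw [List.append_assoc]
    exact plex_append_left b (key ha (Or.inl ⟨⟨d, rfl⟩, hne⟩) ms' hms' d b u' hd hb.1 rfl)
  · exact Or.inr (prec_append hprec)

def RHS (ls ms : List (List X)) : Prop :=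
  (ms.length < ls.length ∧ ls.take ms.length = ms) ∨
  (∃ i, ∃ h₁ : i < ls.length, ∃ h₂ : i < ms.length,
    ls.take i = ms.take i ∧ PLex ls[i] ms[i])

lemma rhs_tri (ls ms : List (List X)) : ls = ms ∨ RHS ls ms ∨ RHS ms ls := by
  induction ls generalizing ms with
  | nil =>
    cases ms with
    | nil => exact Or.inl rfl
    | cons b ms' => exact Or.inr (Or.inr (Or.inl ⟨by simp, by simp⟩))
  | cons a ls' ih =>
    cases ms with
    | nil => exact Or.inr (Or.inl (Or.inl ⟨by simp, by simp⟩))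
    | cons b ms' =>
      rcases plex_trichotomy a b with rfl | h | h
      · rcases ih ms' with rfl | h | h
        · exact Or.inl rfl
        · refine Or.inr (Or.inl ?_)
          rcases h with ⟨h1, h2⟩ | ⟨i, h₁, h₂, h3, h4⟩
          · exact Or.inl ⟨by simpa using h1, by simp [h2]⟩
          · exact Or.inr ⟨i + 1, by simpa using h₁, by simpa using h₂, by simp [h3], by simpa using h4⟩
        · refine Or.inr (Or.inr ?_)
          rcases h with ⟨h1, h2⟩ | ⟨i, h₁, h₂, h3, h4⟩
          · exact Or.inl ⟨by simpa using h1, by simp [h2]⟩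
          · exact Or.inr ⟨i + 1, by simpa using h₁, by simpa using h₂, by simp [h3], by simpa using h4⟩
      · exact Or.inr (Or.inl (Or.inr ⟨0, by simp, by simp, rfl, by simpa using h⟩))
      · exact Or.inr (Or.inr (Or.inr ⟨0, by simp, by simp, rfl, by simpa using h⟩))

lemma rhs_plex (ls ms : List (List X))
    (hls1 : ∀ v ∈ ls, IsLyndon v) (hms1 : ∀ v ∈ ms, IsLyndon v)
    (hms2 : ms.Chain' PLexLe) (h : RHS ls ms) :
    PLex ls.flatten ms.flatten := by
  rcases h with ⟨h1, h2⟩ | ⟨i, h₁, h₂, h3, h4⟩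
  · -- ms is a proper prefix of ls
    have hsplit : ls.flatten = ms.flatten ++ (ls.drop ms.length).flatten := by
      conv_lhs => rw [← List.take_append_drop ms.length ls]
      rw [List.flatten_append, h2]
    have hdrop : ls.drop ms.length ≠ [] := by
      rw [Ne, List.drop_eq_nil_iff]; omega
    have hne : (ls.drop ms.length).flatten ≠ [] := by
      rw [Ne, List.flatten_eq_nil_iff]
      intro hall
      obtain ⟨w, hw⟩ := List.exists_mem_of_ne_nil _ hdrop
      exact (hls1 w (List.mem_of_mem_drop hw)).1 (hall w hw)
    rw [hsplit]
    exact Or.inl ⟨⟨_, rfl⟩, fun he => hne (by simpa using he.symm)⟩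
  · -- first difference at index i
    have hlsplit : ls.flatten = (ls.take i).flatten ++ (ls[i] ++ (ls.drop (i + 1)).flatten) := by
      conv_lhs => rw [← List.take_append_drop i ls]
      rw [List.flatten_append, List.drop_eq_getElem_cons h₁, List.flatten_cons]
    have hmsplit : ms.flatten = (ms.take i).flatten ++ (ms[i] ++ (ms.drop (i + 1)).flatten) := by
      conv_lhs => rw [← List.take_append_drop i ms]
      rw [List.flatten_append, List.drop_eq_getElem_cons h₂, List.flatten_cons]
    rw [hlsplit, hmsplit, ← h3]
    refine plex_append_left _ ?_
    have hpw := List.pairwise_iff_getElem.mp (List.isChain_iff_pairwise.mp hms2)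
    refine step (hls1 _ (List.getElem_mem h₁)) (hms1 _ (List.getElem_mem h₂)) h4
      (fun f hf => ?_) _
    obtain ⟨j, hj, rfl⟩ := List.mem_iff_getElem.mp hf
    rw [List.getElem_drop]
    have hj' : i + 1 + j < ms.length := by
      have := hj; simp only [List.length_drop] at this; omega
    exact hpw i (i + 1 + j) h₂ hj' (by omega)


/-- Comparison of two words via their Lyndon decompositions:
`u <_lex v` iff either the decomposition of `v` is a proper "prefix" of that of `u`,
or the decompositions first differ at an index `l` where `u_l <_lex v_l`. -/
theorem plex_iff_lyndon_decomp (ls ms : List (List X)) (hls : ls ≠ []) (hms : ms ≠ [])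
    (hls' : (∀ v ∈ ls, IsLyndon v) ∧ ls.Chain' PLexLe)
    (hms' : (∀ v ∈ ms, IsLyndon v) ∧ ms.Chain' PLexLe) :
    PLex ls.flatten ms.flatten ↔
      (ms.length < ls.length ∧ ls.take ms.length = ms) ∨
      (∃ i, ∃ h₁ : i < ls.length, ∃ h₂ : i < ms.length,
        ls.take i = ms.take i ∧ PLex ls[i] ms[i]) := by
  constructor
  · intro h
    rcases rhs_tri ls ms with rfl | hr | hr
    · exact absurd h (plex_irrefl _)
    · exact hr
    · exact absurd h (plex_asymm (rhs_plex ms ls hms'.1 hls'.1 hls'.2 hr))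
  · exact rhs_plex ls ms hls'.1 hms'.1 hms'.2
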